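/- Let n ≥ 3 be an integer and let w(t) = Σ_{ℓ≥1} c_ℓ t^ℓ be a formal power series over K with zero constant term such that v(c₂) ≥ n and v(c_ℓ) > n + (1/2)·S(ℓ) − 1/2 for every ℓ ≥ 1 with ℓ ≠ 2. Then for every integer j ≥ 2 and every ℓ ≥ 1, the coefficient of t^ℓ in w(t)^j has valuation strictly greater than j·n + (1/2)·S(ℓ) − j/2. -/

import Mathlib

/-- `S ℓ` is the sum of the digits of `ℓ` in base 2. -/
def S (ℓ : ℕ) : ℕ := (Nat.digits 2 ℓ).sum

lemma S_add_le (a b : ℕ) : S (a + b) ≤ S a + S b := by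
  haveI : Fact (Nat.Prime 2) := ⟨Nat.prime_two⟩
  have ha := sub_one_mul_padicValNat_factorial (p := 2) a
  have hb := sub_one_mul_padicValNat_factorial (p := 2) b
  have hab := sub_one_mul_padicValNat_factorial (p := 2) (a + b)
  have hsa : S a ≤ a := Nat.digit_sum_le 2 a
  have hsb : S b ≤ b := Nat.digit_sum_le 2 b
  have hsab : S (a + b) ≤ a + b := Nat.digit_sum_le 2 (a + b)
  have hdvd : padicValNat 2 (Nat.factorial a * Nat.factorial b) ≤
      padicValNat 2 (Nat.factorial (a + b)) := by
    rw [← padicValNat_dvd_iff_le (Nat.factorial_ne_zero _)]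
    exact dvd_trans (pow_padicValNat_dvd) (Nat.factorial_mul_factorial_dvd_factorial_add a b)
  rw [padicValNat.mul (Nat.factorial_ne_zero _) (Nat.factorial_ne_zero _)] at hdvd
  simp only [S] at hsa hsb hsab ⊢
  omega

lemma S_two : S 2 = 1 := by simp [S]

lemma S_four : S 4 = 1 := by simp [S]

theorem stmt_19 (K : Type*) [Field K] [CharZero K] (v : K → WithTop ℚ)
    (hv0 : ∀ x : K, v x = ⊤ ↔ x = 0)
    (hvmul : ∀ x y : K, v (x * y) = v x + v y)
    (hvadd : ∀ x y : K, min (v x) (v y) ≤ v (x + y))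
    (hv2 : v 2 = 1)
    (n : ℕ) (hn : 3 ≤ n)
    (w : PowerSeries K)
    (h0 : PowerSeries.coeff 0 w = 0)
    (h2 : (((n : ℚ)) : WithTop ℚ) ≤ v (PowerSeries.coeff 2 w))
    (hgen : ∀ ℓ : ℕ, 1 ≤ ℓ → ℓ ≠ 2 →
      (((n : ℚ) + (S ℓ : ℚ) / 2 - 1 / 2 : ℚ) : WithTop ℚ) < v (PowerSeries.coeff ℓ w))
    (j : ℕ) (hj : 2 ≤ j) (ℓ : ℕ) (hℓ : 1 ≤ ℓ) :
    (((j : ℚ) * (n : ℚ) + (S ℓ : ℚ) / 2 - (j : ℚ) / 2 : ℚ) : WithTop ℚ) <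
      v (PowerSeries.coeff ℓ (w ^ j)) := by
  have hvtop : v 0 = ⊤ := (hv0 0).2 rfl
  -- sum lemma
  have hsum : ∀ (s : Finset (ℕ × ℕ)) (f : ℕ × ℕ → K) (q : ℚ),
      (∀ i ∈ s, (q : WithTop ℚ) < v (f i)) → (q : WithTop ℚ) < v (∑ i ∈ s, f i) := by
    intro s f q
    induction s using Finset.induction_on with
    | empty => intro _; simp only [Finset.sum_empty, hvtop]; exact WithTop.coe_lt_top q
    | insert _ _ hx ih =>
      intro h
      rw [Finset.sum_insert hx]
      exact lt_of_lt_of_le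
        (lt_min (h _ (Finset.mem_insert_self _ _))
          (ih fun i hi => h i (Finset.mem_insert_of_mem hi))) (hvadd _ _)
  -- base facts about w
  have hbase_le : ∀ ℓ' : ℕ,
      (((n : ℚ) + (S ℓ' : ℚ) / 2 - 1 / 2 : ℚ) : WithTop ℚ) ≤ v (PowerSeries.coeff ℓ' w) := by
    intro ℓ'
    rcases Nat.eq_zero_or_pos ℓ' with h | h
    · subst h; rw [h0, hvtop]; exact le_top
    · by_cases h2' : ℓ' = 2
      · subst h2'; rw [S_two]
        have heq2 : ((n : ℚ) + ((1 : ℕ) : ℚ) / 2 - 1 / 2 : ℚ) = (n : ℚ) := by push_cast; ring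
        rw [heq2]; exact h2
      · exact le_of_lt (hgen ℓ' h h2')
  have hbase_lt : ∀ ℓ' : ℕ, ℓ' ≠ 2 →
      (((n : ℚ) + (S ℓ' : ℚ) / 2 - 1 / 2 : ℚ) : WithTop ℚ) < v (PowerSeries.coeff ℓ' w) := by
    intro ℓ' hne
    rcases Nat.eq_zero_or_pos ℓ' with h | h
    · subst h; rw [h0, hvtop]; exact WithTop.coe_lt_top _
    · exact hgen ℓ' h hne
  -- main induction
  have main : ∀ j' : ℕ, 1 ≤ j' → ∀ m : ℕ,
      ((((j' : ℚ) * (n : ℚ) + (S m : ℚ) / 2 - (j' : ℚ) / 2 : ℚ) : WithTop ℚ) ≤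
        v (PowerSeries.coeff m (w ^ j'))) ∧
      ((2 ≤ j' ∨ m ≠ 2) →
        (((j' : ℚ) * (n : ℚ) + (S m : ℚ) / 2 - (j' : ℚ) / 2 : ℚ) : WithTop ℚ) <
          v (PowerSeries.coeff m (w ^ j'))) := by
    intro j' hj'
    induction j', hj' using Nat.le_induction with
    | base =>
      intro m
      have heq : ((1 : ℚ) * (n : ℚ) + (S m : ℚ) / 2 - (1 : ℚ) / 2 : ℚ)
          = ((n : ℚ) + (S m : ℚ) / 2 - 1 / 2 : ℚ) := by ring
      constructor
      · rw [pow_one, Nat.cast_one, heq]; exact hbase_le m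
      · intro hc
        rcases hc with hc | hc
        · omega
        · rw [pow_one, Nat.cast_one, heq]; exact hbase_lt m hc
    | succ j' hj1 ih =>
      intro m
      have strict : (((j' + 1 : ℕ) : ℚ) * (n : ℚ) + (S m : ℚ) / 2 - ((j' + 1 : ℕ) : ℚ) / 2 :
          ℚ) < v (PowerSeries.coeff m (w ^ (j' + 1))) := by
        rw [pow_succ, PowerSeries.coeff_mul]
        apply hsum
        rintro ⟨a, b⟩ hp
        have hab : a + b = m := Finset.HasAntidiagonal.mem_antidiagonal.mp hp
        rcases Nat.eq_zero_or_pos a with ha0 | ha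
        · subst ha0
          have hz : PowerSeries.coeff 0 (w ^ j') = 0 := by
            rw [PowerSeries.coeff_zero_eq_constantCoeff, map_pow,
              ← PowerSeries.coeff_zero_eq_constantCoeff, h0, zero_pow (by omega : j' ≠ 0)]
          simp only [hz, zero_mul, hvtop]
          exact WithTop.coe_lt_top _
        rcases Nat.eq_zero_or_pos b with hb0 | hb
        · subst hb0
          simp only [h0, mul_zero, hvtop]
          exact WithTop.coe_lt_top _
        -- both positive
        subst hab
        rw [hvmul]
        set A : ℚ := (j' : ℚ) * (n : ℚ) + (S a : ℚ) / 2 - (j' : ℚ) / 2 with hA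
        set B : ℚ := (n : ℚ) + (S b : ℚ) / 2 - 1 / 2 with hB
        have hSab : (S (a + b) : ℚ) ≤ (S a : ℚ) + (S b : ℚ) := by
          exact_mod_cast S_add_le a b
        have hq : (((j' + 1 : ℕ) : ℚ) * (n : ℚ) + (S (a + b) : ℚ) / 2 -
            ((j' + 1 : ℕ) : ℚ) / 2 : ℚ) ≤ A + B := by
          rw [hA, hB]; push_cast; linarith
        by_cases hcase : 2 ≤ j' ∨ a ≠ 2
        · have h1 : (A : WithTop ℚ) < v (PowerSeries.coeff a (w ^ j')) := (ih a).2 hcase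
          have h2' : (B : WithTop ℚ) ≤ v (PowerSeries.coeff b w) := hbase_le b
          calc ((((j' + 1 : ℕ) : ℚ) * (n : ℚ) + (S (a + b) : ℚ) / 2 -
                ((j' + 1 : ℕ) : ℚ) / 2 : ℚ) : WithTop ℚ)
              ≤ ((A + B : ℚ) : WithTop ℚ) := by exact_mod_cast hq
            _ = (A : WithTop ℚ) + (B : WithTop ℚ) := by push_cast; rfl
            _ < _ := WithTop.add_lt_add_of_lt_of_le (WithTop.coe_ne_top) h1 h2'
        · push_neg at hcase
          obtain ⟨hjlt, ha2⟩ := hcase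
          have hj1' : j' = 1 := by omega
          subst hj1' ha2
          have h1 : (A : WithTop ℚ) ≤ v (PowerSeries.coeff 2 (w ^ 1)) := (ih 2).1
          by_cases hb2 : b = 2
          · subst hb2
            have hqs : (((1 + 1 : ℕ) : ℚ) * (n : ℚ) + (S (2 + 2) : ℚ) / 2 -
                ((1 + 1 : ℕ) : ℚ) / 2 : ℚ) < A + B := by
              rw [hA, hB]
              have h4 : ((2 + 2 : ℕ)) = 4 := by norm_num
              rw [h4, S_four, S_two]; push_cast; linarith
            have h2' : (B : WithTop ℚ) ≤ v (PowerSeries.coeff 2 w) := hbase_le 2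
            calc ((((1 + 1 : ℕ) : ℚ) * (n : ℚ) + (S (2 + 2) : ℚ) / 2 -
                  ((1 + 1 : ℕ) : ℚ) / 2 : ℚ) : WithTop ℚ)
                < ((A + B : ℚ) : WithTop ℚ) := by exact_mod_cast hqs
              _ = (A : WithTop ℚ) + (B : WithTop ℚ) := by push_cast; rfl
              _ ≤ _ := add_le_add h1 h2'
          · have h2' : (B : WithTop ℚ) < v (PowerSeries.coeff b w) := hbase_lt b hb2
            calc ((((1 + 1 : ℕ) : ℚ) * (n : ℚ) + (S (2 + b) : ℚ) / 2 -
                  ((1 + 1 : ℕ) : ℚ) / 2 : ℚ) : WithTop ℚ)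
                ≤ ((A + B : ℚ) : WithTop ℚ) := by exact_mod_cast hq
              _ = (A : WithTop ℚ) + (B : WithTop ℚ) := by push_cast; rfl
              _ < _ := WithTop.add_lt_add_of_le_of_lt (WithTop.coe_ne_top) h1 h2'
      exact ⟨le_of_lt strict, fun _ => strict⟩
  exact (main j (by omega) ℓ).2 (Or.inl hj)
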